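/- arXiv:2203.16693 — 7 statements merged into one kernel-verified Lean document; each statement's English description precedes it below -/
import Mathlib

section
/- Let (X,·) be a finite non-degenerate cycle set and for x ∈ X let σ_x denote the bijection y ↦ x·y. Define r : X × X → X × X by r(x,y) = (σ_x^{-1}(y), σ_x^{-1}(y)·x). Then r satisfies the set-theoretic Yang–Baxter (braid) relation (r×id)(id×r)(r×id) = (id×r)(r×id)(id×r), r is involutive (r∘r = id), and r is non-degenerate, i.e. writing r(x,y) = (λ_x(y), ρ_y(x)), all the maps λ_x and ρ_x are bijections of X. -/
/-- The map `r × id` on triples. -/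
def rOne {X : Type*} (r : X × X → X × X) : X × X × X → X × X × X :=
  fun p => ((r (p.1, p.2.1)).1, (r (p.1, p.2.1)).2, p.2.2)

/-- The map `id × r` on triples. -/
def rTwo {X : Type*} (r : X × X → X × X) : X × X × X → X × X × X :=
  fun p => (p.1, r (p.2.1, p.2.2))

theorem stmt0 {X : Type*} [Finite X] (op : X → X → X)
    (hbij : ∀ x, Function.Bijective (op x))
    (hlaw : ∀ x y z, op (op x y) (op x z) = op (op y x) (op y z))
    (hnd : Function.Bijective fun x => op x x) :
    ∀ r : X × X → X × X,
      (∀ x y, r (x, y) =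
        ((Equiv.ofBijective (op x) (hbij x)).symm y,
          op ((Equiv.ofBijective (op x) (hbij x)).symm y) x)) →
      (rOne r ∘ rTwo r ∘ rOne r = rTwo r ∘ rOne r ∘ rTwo r) ∧
      (∀ p, r (r p) = p) ∧
      (∀ x, Function.Bijective fun y => (r (x, y)).1) ∧
      (∀ y, Function.Bijective fun x => (r (x, y)).2) := by
  intro r hr
  have key : ∀ x y, (Equiv.ofBijective (op x) (hbij x)).symm (op x y) = y :=
    fun x y => (Equiv.ofBijective (op x) (hbij x)).symm_apply_apply y
  have key2 : ∀ x y, op x ((Equiv.ofBijective (op x) (hbij x)).symm y) = y :=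
    fun x y => (Equiv.ofBijective (op x) (hbij x)).apply_symm_apply y
  have hinv : ∀ p, r (r p) = p := by
    rintro ⟨x, y⟩
    rw [hr, hr, key]
    simp [key2]
  refine ⟨?_, hinv, ?_, ?_⟩
  · funext p
    obtain ⟨x, y, z⟩ := p
    obtain ⟨a, rfl⟩ := (hbij x).2 y
    obtain ⟨b, rfl⟩ := (hbij (op a x)).2 z
    obtain ⟨c, rfl⟩ := (hbij a).2 b
    simp only [Function.comp_apply, rOne, rTwo, hr, key]
    rw [show op (op a x) (op a c) = op (op x a) (op x c) from (hlaw x a c).symm, key, key,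
      show op (op x c) (op x a) = op (op c x) (op c a) from hlaw x c a, key,
      hlaw c a x, hlaw a c x]
  · intro x
    have : (fun y => (r (x, y)).1) = (Equiv.ofBijective (op x) (hbij x)).symm := by
      funext y; rw [hr]
    rw [this]
    exact (Equiv.ofBijective (op x) (hbij x)).symm.bijective
  · intro y
    rw [← Finite.injective_iff_bijective]
    intro x1 x2 h
    simp only [hr] at h
    set u1 := (Equiv.ofBijective (op x1) (hbij x1)).symm y with hu1
    set u2 := (Equiv.ofBijective (op x2) (hbij x2)).symm y with hu2
    have e1 : op x1 u1 = y := key2 x1 y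
    have e2 : op x2 u2 = y := key2 x2 y
    have l1 := hlaw x1 u1 x1
    have l2 := hlaw x2 u2 x2
    rw [e1] at l1
    rw [e2] at l2
    rw [h] at l1
    have : op x1 x1 = op x2 x2 := (hbij y).1 (l1.trans l2.symm)
    exact hnd.1 this
end

section
/- Let X be a set and r : X × X → X × X a map satisfying the braid relation (r×id)(id×r)(r×id) = (id×r)(r×id)(id×r), which is involutive (r∘r = id) and non-degenerate, i.e. writing r(x,y) = (λ_x(y), ρ_y(x)), all maps λ_x and ρ_x are bijections of X. Then the binary operation x·y := λ_x^{-1}(y) makes X a non-degenerate cycle set, and moreover r(x,y) = (σ_x^{-1}(y), σ_x^{-1}(y)·x) where σ_x(y) = x·y. -/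
theorem stmt1 {X : Type*} (r : X × X → X × X) (lam rho : X → X → X)
    (hr : ∀ x y, r (x, y) = (lam x y, rho y x))
    (hlam : ∀ x, Function.Bijective (lam x))
    (hrho : ∀ x, Function.Bijective (rho x))
    (hbraid : rOne r ∘ rTwo r ∘ rOne r = rTwo r ∘ rOne r ∘ rTwo r)
    (hinv : ∀ p, r (r p) = p) :
    ∀ op : X → X → X, (∀ x y, lam x (op x y) = y) →
      (∀ x, Function.Bijective (op x)) ∧
      (∀ x y z, op (op x y) (op x z) = op (op y x) (op y z)) ∧
      Function.Bijective (fun x => op x x) ∧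
      (∀ x y, r (x, y) = (lam x y, op (lam x y) x)) := by
  intro op hop
  -- involutivity identities
  have I1 : ∀ x y, lam (lam x y) (rho y x) = x := by
    intro x y
    have h := hinv (x, y)
    rw [hr, hr] at h
    exact congrArg Prod.fst h
  have I2 : ∀ x y, rho (rho y x) (lam x y) = y := by
    intro x y
    have h := hinv (x, y)
    rw [hr, hr] at h
    exact congrArg Prod.snd h
  -- Yang-Baxter first-component identity
  have Y1 : ∀ x y z, lam (lam x y) (lam (rho y x) z) = lam x (lam y z) := by
    intro x y z
    have h := congrFun hbraid (x, y, z)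
    simp only [rOne, rTwo, Function.comp_apply, hr] at h
    exact congrArg Prod.fst h
  -- op x is the inverse of lam x
  have hop' : ∀ x y, op x (lam x y) = y := by
    intro x y
    apply (hlam x).injective
    rw [hop]
  have hopbij : ∀ x, Function.Bijective (op x) := by
    intro x
    constructor
    · intro a b hab
      have := congrArg (lam x) hab
      rwa [hop, hop] at this
    · intro z
      exact ⟨lam x z, hop' x z⟩
  -- key: rho (op x y) x = op y x
  have key : ∀ x y, rho (op x y) x = op y x := by
    intro x y
    have h := I1 x (op x y)
    rw [hop] at h
    have := congrArg (op y) h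
    rwa [hop'] at this
  refine ⟨hopbij, ?_, ?_, ?_⟩
  · -- cycle set condition
    intro x y z
    apply (hlam (op x y)).injective
    apply (hlam x).injective
    rw [hop, hop]
    have h1 := Y1 x (op x y) (op (op y x) (op y z))
    rw [hop, key] at h1
    rw [← h1, hop, hop]
  · -- squaring bijective
    constructor
    · intro a b hab
      simp only at hab
      set t := op a a with ht
      have ha : rho t a = t := by
        have h := I1 a (op a a)
        rw [hop] at h
        have h2 : lam a (op a a) = a := hop a a
        exact (hlam a).injective (h.trans h2.symm)
      have hb : rho t b = t := by
        have h := I1 b (op b b)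
        rw [hop] at h
        have h2 : lam b (op b b) = b := hop b b
        rw [← hab] at h h2
        exact (hlam b).injective (h.trans h2.symm)
      exact (hrho t).injective (ha.trans hb.symm)
    · intro y
      obtain ⟨x, hx⟩ := (hrho y).surjective y
      refine ⟨x, ?_⟩
      have h := I2 x y
      rw [hx] at h
      have hxy : lam x y = x := (hrho y).injective (h.trans hx.symm)
      simp only
      calc op x x = op x (lam x y) := by rw [hxy]
        _ = y := hop' x y
  · -- formula for r
    intro x y
    rw [hr]
    have h := I1 x y
    have := congrArg (op (lam x y)) h
    rw [hop'] at this
    rw [this]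
end

section
/- Let (X,·) be a cycle set and for x ∈ X let σ_x denote the bijection y ↦ x·y. The relation x ∼ y :⇔ σ_x = σ_y is a congruence of X: if σ_x = σ_y and σ_u = σ_v, then σ_{x·u} = σ_{y·v}. Consequently the quotient set X/∼ inherits a well-defined cycle set structure (the retraction of X). -/
theorem stmt2 {X : Type*} [Finite X] (op : X → X → X)
    (hbij : ∀ x, Function.Bijective (op x))
    (hlaw : ∀ x y z, op (op x y) (op x z) = op (op y x) (op y z))
    (hnd : Function.Bijective fun x => op x x) :
    (∀ x y u v : X, op x = op y → op u = op v → op (op x u) = op (op y v)) ∧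
    ∃ qop : Quotient (Setoid.ker op) → Quotient (Setoid.ker op) → Quotient (Setoid.ker op),
      (∀ x y : X, qop (Quotient.mk (Setoid.ker op) x) (Quotient.mk (Setoid.ker op) y) =
          Quotient.mk (Setoid.ker op) (op x y)) ∧
      (∀ a, Function.Bijective (qop a)) ∧
      (∀ a b c, qop (qop a b) (qop a c) = qop (qop b a) (qop b c)) := by
  have step : ∀ y u v : X, op u = op v → op (op y u) = op (op y v) := by
    intro y u v huv
    funext w
    obtain ⟨z, hz⟩ := (hbij y).2 w
    rw [← hz, hlaw y u z, hlaw y v z, huv]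
  have key : ∀ x y u v : X, op x = op y → op u = op v → op (op x u) = op (op y v) := by
    intro x y u v hxy huv
    have h1 := step x u v huv
    have h2 : op x v = op y v := by rw [hxy]
    rw [h1, h2]
  refine ⟨key, ?_⟩
  refine ⟨Quotient.map₂ op (fun x y hxy u v huv => key x y u v hxy huv), fun x y => rfl, ?_, ?_⟩
  · intro a
    rw [← Finite.injective_iff_bijective, Finite.injective_iff_surjective]
    intro b
    induction a using Quotient.ind with
    | _ x =>
    induction b using Quotient.ind with
    | _ z =>
    obtain ⟨w, hw⟩ := (hbij x).2 z
    exact ⟨Quotient.mk _ w, by rw [show (Quotient.map₂ op _ (Quotient.mk _ x) (Quotient.mk _ w) : Quotient (Setoid.ker op)) = Quotient.mk _ (op x w) from rfl, hw]⟩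
  · intro a b c
    induction a using Quotient.ind with
    | _ x =>
    induction b using Quotient.ind with
    | _ y =>
    induction c using Quotient.ind with
    | _ z =>
    exact congrArg (Quotient.mk _) (hlaw x y z)
end

section
/- Let X be a finite non-degenerate cycle set that is simple and has cardinality |X| > 2. Then X is indecomposable, i.e. the subgroup of Sym(X) generated by the left multiplications {σ_x : x ∈ X} acts transitively on X. -/
universe u

/-- A cycle set structure `op` on `X` is simple if `|X| > 1` and every surjective
cycle set homomorphism from `X` onto a cycle set `Y` with `|Y| > 1` is bijective. -/
def IsSimpleCycleSet {X : Type u} (op : X → X → X) : Prop :=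
  1 < Nat.card X ∧
    ∀ (Y : Type u) (opY : Y → Y → Y),
      (∀ y, Function.Bijective (opY y)) →
      (∀ a b c, opY (opY a b) (opY a c) = opY (opY b a) (opY b c)) →
      ∀ f : X → Y, Function.Surjective f →
        (∀ a b, f (op a b) = opY (f a) (f b)) →
        1 < Nat.card Y → Function.Bijective f

theorem stmt3 {X : Type u} [Finite X] (op : X → X → X)
    (hbij : ∀ x, Function.Bijective (op x))
    (hlaw : ∀ x y z, op (op x y) (op x z) = op (op y x) (op y z))
    (hnd : Function.Bijective fun x => op x x)
    (hsimple : IsSimpleCycleSet op)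
    (hcard : 2 < Nat.card X) :
    ∀ x y : X,
      ∃ g ∈ Subgroup.closure {s : Equiv.Perm X | ∃ z, ∀ w, s w = op z w}, g x = y := by
  classical
  intro x y
  by_contra hcon
  push_neg at hcon
  set G := Subgroup.closure {s : Equiv.Perm X | ∃ z, ∀ w, s w = op z w} with hG
  have hsig : ∀ a : X, Equiv.ofBijective (op a) (hbij a) ∈ G := fun a =>
    Subgroup.subset_closure ⟨a, fun w => rfl⟩
  -- Step A: the operation is not trivial.
  have hnt : ¬ (∀ a b : X, op a b = b) := by
    intro htriv
    have hFin : Fintype X := Fintype.ofFinite X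
    have h3 : 2 < Fintype.card X := by rwa [Nat.card_eq_fintype_card] at hcard
    obtain ⟨a, b, c, hab, hac, hbc⟩ := Fintype.two_lt_card_iff.mp h3
    set h : X → ULift.{u} Bool := fun z => if z = a then ⟨true⟩ else ⟨false⟩ with hh
    have hsurj : Function.Surjective h := by
      rintro ⟨b'⟩
      cases b' with
      | true => exact ⟨a, by simp [hh]⟩
      | false => exact ⟨b, by simp [hh, Ne.symm hab]⟩
    have hcardB : (1 : ℕ) < Nat.card (ULift.{u} Bool) := by
      simp [Nat.card_eq_fintype_card]
    have hbijh := hsimple.2 (ULift.{u} Bool) (fun _ b => b)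
      (fun _ => Function.bijective_id) (fun _ _ _ => rfl) h hsurj
      (fun u v => by rw [htriv]) hcardB
    have : h b = h c := by simp [hh, Ne.symm hab, Ne.symm hac]
    exact hbc (hbijh.1 this)
  -- Step B: the orbit quotient.
  let r : Setoid X :=
    ⟨fun u v => ∃ g ∈ G, g u = v,
      ⟨fun u => ⟨1, G.one_mem, rfl⟩,
       fun {u v} ⟨g, hg, h⟩ => ⟨g⁻¹, G.inv_mem hg, by simp [← h]⟩,
       fun {u v w} ⟨g, hg, h1⟩ ⟨g', hg', h2⟩ =>
         ⟨g' * g, G.mul_mem hg' hg, by simp [h1, h2]⟩⟩⟩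
  let f : X → Quotient r := Quotient.mk r
  have hhom : ∀ a b : X, f (op a b) = f b := by
    intro a b
    exact Quotient.sound (r.symm ⟨Equiv.ofBijective (op a) (hbij a), hsig a, rfl⟩)
  have hne : f x ≠ f y := by
    intro h
    exact hcon _ (Quotient.exact h).choose_spec.1 (Quotient.exact h).choose_spec.2
  haveI : Nontrivial (Quotient r) := ⟨f x, f y, hne⟩
  have hcardQ : 1 < Nat.card (Quotient r) := Finite.one_lt_card
  have hbijf := hsimple.2 (Quotient r) (fun _ b => b)
    (fun _ => Function.bijective_id) (fun _ _ _ => rfl)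
    f (Quotient.mk''_surjective) hhom hcardQ
  exact hnt fun a b => hbijf.1 (hhom a b)
end

section
/- Let X be a finite non-degenerate cycle set that is simple and whose cardinality |X| is not a prime number. Then X is irretractable, i.e. σ_x = σ_y implies x = y. -/
universe u

/-- Well-definedness of the retraction: if `σ_a = σ_a'` and `σ_b = σ_b'` then
`σ_{a·b} = σ_{a'·b'}`. -/
theorem retract_welldef {X : Type u} (op : X → X → X)
    (hbij : ∀ x, Function.Bijective (op x))
    (hlaw : ∀ x y z, op (op x y) (op x z) = op (op y x) (op y z))
    {a a' b b' : X} (ha : op a = op a') (hb : op b = op b') :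
    op (op a b) = op (op a' b') := by
  have h1 : op a b = op a' b := by rw [ha]
  rw [h1]
  funext z
  obtain ⟨w, rfl⟩ := (hbij a').2 z
  calc op (op a' b) (op a' w) = op (op b a') (op b w) := hlaw a' b w
    _ = op (op b' a') (op b' w) := by rw [hb]
    _ = op (op a' b') (op a' w) := hlaw b' a' w

theorem stmt4 {X : Type u} [Finite X] (op : X → X → X)
    (hbij : ∀ x, Function.Bijective (op x))
    (hlaw : ∀ x y z, op (op x y) (op x z) = op (op y x) (op y z))
    (hnd : Function.Bijective fun x => op x x)
    (hsimple : IsSimpleCycleSet op)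
    (hcard : ¬ (Nat.card X).Prime) :
    ∀ x y : X, op x = op y → x = y := by
  classical
  intro x y hxy
  by_contra hne
  have hXnt : Nontrivial X := Finite.one_lt_card_iff_nontrivial.mp hsimple.1
  by_cases hall : ∀ a b : X, op a = op b
  · -- all left multiplications coincide
    obtain ⟨x₀⟩ := (inferInstance : Nonempty X)
    set e : Equiv.Perm X := Equiv.ofBijective (op x₀) (hbij x₀) with he
    have hea : ∀ z, e z = op x₀ z := fun _ => rfl
    -- orbit equivalence relation of the powers of `e`
    let s2 : Setoid X :=
      ⟨fun a b => ∃ k : ℤ, (e ^ k) a = b, by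
        constructor
        · intro a; exact ⟨0, by simp⟩
        · rintro a b ⟨k, rfl⟩
          exact ⟨-k, by rw [← Equiv.Perm.mul_apply, ← zpow_add]; simp⟩
        · rintro a b c ⟨k, rfl⟩ ⟨l, rfl⟩
          exact ⟨l + k, by rw [zpow_add, Equiv.Perm.mul_apply]⟩⟩
    have hσorb : ∀ a b : X, s2.r (op a b) b := by
      intro a b
      refine ⟨-1, ?_⟩
      rw [hall a x₀, ← hea b]
      simp
    by_cases h2 : ∀ b : X, ∃ k : ℤ, (e ^ k) x₀ = b
    · -- single orbit: X is a cycle of non-prime length, contradiction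
      set n := Nat.card X with hn
      have hn1 : 1 < n := hsimple.1
      -- the minimal period of x₀ equals n
      have horb : MulAction.orbit (Subgroup.zpowers e) x₀ = Set.univ := by
        ext b
        simp only [Set.mem_univ, iff_true, MulAction.mem_orbit_iff]
        obtain ⟨k, hk⟩ := h2 b
        exact ⟨⟨e ^ k, Subgroup.zpow_mem _ (Subgroup.mem_zpowers e) k⟩, hk⟩
      have hd : Nat.card (ZMod (Function.minimalPeriod (e • ·) x₀)) = n := by
        rw [← Nat.card_congr (MulAction.orbitZPowersEquiv e x₀), horb, hn]
        exact Nat.card_congr (Equiv.Set.univ X)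
      have hdn : Function.minimalPeriod (e • ·) x₀ = n := by
        rwa [Nat.card_zmod] at hd
      have hkey : ∀ k : ℤ, (e ^ k) x₀ = x₀ → (n : ℤ) ∣ k := by
        intro k hk
        have : e ^ k • x₀ = x₀ := hk
        have := MulAction.zpow_smul_eq_iff_minimalPeriod_dvd.mp this
        rwa [hdn] at this
      obtain ⟨m, hmn, hm2, hmlt⟩ := Nat.exists_dvd_of_not_prime2 hn1 hcard
      have hckey : ∀ a b : ℤ, (e ^ a) x₀ = (e ^ b) x₀ → ((a : ZMod m) = (b : ZMod m)) := by
        intro a b h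
        have h1 : (e ^ (a - b)) x₀ = x₀ := by
          have : e ^ (a - b) = e ^ (-b) * e ^ a := by
            rw [← zpow_add]; ring_nf
          rw [this, Equiv.Perm.mul_apply, h, ← Equiv.Perm.mul_apply, ← zpow_add]
          simp
        have h3 : (m : ℤ) ∣ a - b :=
          dvd_trans (Int.natCast_dvd_natCast.mpr hmn) (hkey _ h1)
        have h4 : (((a - b : ℤ)) : ZMod m) = 0 :=
          (ZMod.intCast_zmod_eq_zero_iff_dvd _ _).mpr h3
        push_cast at h4
        linear_combination h4
      -- the homomorphism to ZMod m
      let f4 : X → ULift.{u} (ZMod m) :=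
        fun b => ULift.up (((Classical.choose (h2 b) : ℤ) : ZMod m))
      have hf4 : ∀ (b : X) (k : ℤ), (e ^ k) x₀ = b → f4 b = ULift.up ((k : ZMod m)) := by
        intro b k hk
        have := hckey _ _ ((Classical.choose_spec (h2 b)).trans hk.symm)
        simp only [f4, this]
      let op4 : ULift.{u} (ZMod m) → ULift.{u} (ZMod m) → ULift.{u} (ZMod m) :=
        fun _ b => ULift.up (b.down + 1)
      have hbij4 : ∀ y, Function.Bijective (op4 y) := by
        intro y
        constructor
        · intro a b h
          have h' : a.down + 1 = b.down + 1 := congrArg ULift.down h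
          exact ULift.down_injective (add_right_cancel h')
        · rintro ⟨c⟩
          exact ⟨ULift.up (c - 1), by simp [op4]⟩
      have hlaw4 : ∀ a b c, op4 (op4 a b) (op4 a c) = op4 (op4 b a) (op4 b c) := by
        intros; rfl
      have hhom4 : ∀ a b, f4 (op a b) = op4 (f4 a) (f4 b) := by
        intro a b
        obtain ⟨j, hj⟩ := h2 b
        have hb : f4 b = ULift.up ((j : ZMod m)) := hf4 b j hj
        have hab : (e ^ (j + 1)) x₀ = op a b := by
          rw [hall a x₀, ← hea b, ← hj]
          rw [show (j + 1 : ℤ) = 1 + j by ring, zpow_add, Equiv.Perm.mul_apply, zpow_one]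
        have := hf4 _ _ hab
        rw [this, hb]
        show ULift.up (((j + 1 : ℤ) : ZMod m)) = ULift.up ((j : ZMod m) + 1)
        congr 1
        push_cast
        ring
      have hsurj4 : Function.Surjective f4 := by
        rintro ⟨c⟩
        obtain ⟨k, rfl⟩ := ZMod.intCast_surjective c
        exact ⟨(e ^ k) x₀, hf4 _ k rfl⟩
      have hcard4 : Nat.card (ULift.{u} (ZMod m)) = m := by
        rw [Nat.card_ulift, Nat.card_zmod]
      have hbf4 := hsimple.2 _ op4 hbij4 hlaw4 f4 hsurj4 hhom4 (by omega)
      have : Nat.card X = m := (Nat.card_eq_of_bijective f4 hbf4).trans hcard4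
      omega
    · -- more than one orbit: quotient by orbits, get `op a b = b`, then map to Bool
      push_neg at h2
      obtain ⟨b₀, hb₀⟩ := h2
      let Y2 := Quotient s2
      let op2 : Y2 → Y2 → Y2 := fun _ b => b
      have hnt2 : Nontrivial Y2 := by
        refine ⟨Quotient.mk s2 x₀, Quotient.mk s2 b₀, fun h => ?_⟩
        obtain ⟨k, hk⟩ := Quotient.exact h
        exact hb₀ k hk
      have hhom2 : ∀ a b, Quotient.mk s2 (op a b) = op2 (Quotient.mk s2 a) (Quotient.mk s2 b) :=
        fun a b => Quotient.sound (hσorb a b)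
      have hbf2 := hsimple.2 Y2 op2 (fun _ => Function.bijective_id)
        (fun _ _ _ => rfl) (Quotient.mk s2) (fun q => Quotient.exists_rep q) hhom2
        (Finite.one_lt_card_iff_nontrivial.mpr hnt2)
      have hid : ∀ a b : X, op a b = b := by
        intro a b
        exact hbf2.1 ((hhom2 a b).trans rfl)
      -- now map onto a two-element set
      let f3 : X → ULift.{u} Bool := fun z => ULift.up (if z = x₀ then true else false)
      let op3 : ULift.{u} Bool → ULift.{u} Bool → ULift.{u} Bool := fun _ b => b
      have hsurj3 : Function.Surjective f3 := by
        rintro ⟨c⟩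
        cases c with
        | true => exact ⟨x₀, by simp [f3]⟩
        | false =>
          obtain ⟨z, hz⟩ := exists_ne x₀
          exact ⟨z, by simp [f3, hz]⟩
      have hcard3 : Nat.card (ULift.{u} Bool) = 2 := by
        rw [Nat.card_ulift, Nat.card_eq_fintype_card, Fintype.card_bool]
      have hbf3 := hsimple.2 _ op3 (fun _ => Function.bijective_id)
        (fun _ _ _ => rfl) f3 hsurj3 (fun a b => by rw [hid a b]) (by omega)
      have : Nat.card X = 2 := (Nat.card_eq_of_bijective f3 hbf3).trans hcard3
      rw [this] at hcard
      exact hcard Nat.prime_two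
  · -- retraction is a proper quotient: contradiction with simplicity
    push_neg at hall
    obtain ⟨a₀, b₀, hab⟩ := hall
    let s : Setoid X :=
      ⟨fun a b => op a = op b, by
        constructor
        · intro a; rfl
        · intro a b h; exact h.symm
        · intro a b c h1 h2; exact h1.trans h2⟩
    let Y1 := Quotient s
    let op1 : Y1 → Y1 → Y1 :=
      Quotient.lift₂ (fun a b => Quotient.mk s (op a b))
        (fun a b a' b' ha hb => Quotient.sound (retract_welldef op hbij hlaw ha hb))
    have hbij1 : ∀ q : Y1, Function.Bijective (op1 q) := by
      intro q
      apply Function.Surjective.bijective_of_finite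
      intro z
      induction q using Quotient.ind with
      | _ a =>
        induction z using Quotient.ind with
        | _ c =>
          obtain ⟨w, hw⟩ := (hbij a).2 c
          exact ⟨Quotient.mk s w, by simp only [op1, Quotient.lift₂_mk, hw]⟩
    have hlaw1 : ∀ a b c : Y1, op1 (op1 a b) (op1 a c) = op1 (op1 b a) (op1 b c) := by
      intro a b c
      induction a using Quotient.ind with
      | _ a =>
        induction b using Quotient.ind with
        | _ b =>
          induction c using Quotient.ind with
          | _ c =>
            show Quotient.mk s (op (op a b) (op a c)) = Quotient.mk s (op (op b a) (op b c))
            rw [hlaw a b c]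
    have hnt1 : Nontrivial Y1 :=
      ⟨Quotient.mk s a₀, Quotient.mk s b₀, fun h => hab (Quotient.exact h)⟩
    have hbf1 := hsimple.2 Y1 op1 hbij1 hlaw1 (Quotient.mk s)
      (fun q => Quotient.exists_rep q) (fun _ _ => rfl)
      (Finite.one_lt_card_iff_nontrivial.mpr hnt1)
    exact hne (hbf1.1 (Quotient.sound hxy))
end

section
/- Let A be a finite left brace. Then the binary operation a·b := λ_a^{-1}(b) makes A a non-degenerate cycle set. -/
/-- A left brace structure on an additive abelian group `A`: a group operation `mul`
(with identity `one` and inverses `inv`) satisfying `a ∘ (b + c) + a = a ∘ b + a ∘ c`. -/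
structure LeftBrace (A : Type*) [AddCommGroup A] where
  mul : A → A → A
  one : A
  inv : A → A
  mul_assoc' : ∀ a b c, mul (mul a b) c = mul a (mul b c)
  one_mul' : ∀ a, mul one a = a
  mul_one' : ∀ a, mul a one = a
  inv_mul' : ∀ a, mul (inv a) a = one
  mul_inv' : ∀ a, mul a (inv a) = one
  compat : ∀ a b c, mul a (b + c) + a = mul a b + mul a c

namespace LeftBrace

variable {A : Type*} [AddCommGroup A]

/-- The map `λ_a : b ↦ -a + a ∘ b`. -/
def lam (B : LeftBrace A) (a b : A) : A := -a + B.mul a b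

/-- The cycle set operation `x · y := λ_x⁻¹ (y)` associated to a left brace. -/
noncomputable def cop (B : LeftBrace A) (x y : A) : A :=
  @Function.invFun A A ⟨0⟩ (B.lam x) y

/-- An ideal of a left brace: a normal subgroup of `(A, ∘)` invariant under all `λ_a`. -/
def IsIdeal (B : LeftBrace A) (I : Set A) : Prop :=
  B.one ∈ I ∧ (∀ a ∈ I, ∀ b ∈ I, B.mul a b ∈ I) ∧ (∀ a ∈ I, B.inv a ∈ I) ∧
    (∀ g : A, ∀ a ∈ I, B.mul (B.mul g a) (B.inv g) ∈ I) ∧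
    (∀ g : A, ∀ a ∈ I, B.lam g a ∈ I)

end LeftBrace

namespace LeftBrace

variable {A : Type*} [AddCommGroup A] (B : LeftBrace A)

lemma mul_zero' (a : A) : B.mul a 0 = a := by
  have h := B.compat a 0 0
  rw [add_zero] at h
  exact (add_left_cancel h).symm

lemma one_eq_zero : B.one = 0 := by
  have h1 := B.mul_zero' B.one
  have h2 := B.one_mul' (0 : A)
  rw [h2] at h1
  exact h1.symm

lemma mul_neg' (a b : A) : B.mul a (-b) = a + a - B.mul a b := by
  have h := B.compat a b (-b)
  rw [add_neg_cancel, B.mul_zero'] at h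
  exact eq_sub_of_add_eq (by rw [add_comm]; exact h.symm)

lemma lam_mul (a b c : A) : B.lam (B.mul a b) c = B.lam a (B.lam b c) := by
  have h : B.mul a (-b + B.mul b c)
      = B.mul a (-b) + B.mul a (B.mul b c) - a :=
    eq_sub_of_add_eq (B.compat a (-b) (B.mul b c))
  simp only [lam]
  rw [h, B.mul_neg', ← B.mul_assoc']
  abel

lemma lam_one (c : A) : B.lam B.one c = c := by
  rw [lam, B.one_mul', B.one_eq_zero, neg_zero, zero_add]

lemma lam_bijective (a : A) : Function.Bijective (B.lam a) := by
  refine Function.bijective_iff_has_inverse.2 ⟨B.lam (B.inv a), fun c => ?_, fun c => ?_⟩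
  · rw [← B.lam_mul, B.inv_mul', B.lam_one]
  · rw [← B.lam_mul, B.mul_inv', B.lam_one]

lemma lam_cop (a b : A) : B.lam a (B.cop a b) = b :=
  @Function.rightInverse_invFun A A ⟨0⟩ _ (B.lam_bijective a).surjective b

lemma cop_lam (a b : A) : B.cop a (B.lam a b) = b :=
  @Function.leftInverse_invFun A A ⟨0⟩ _ (B.lam_bijective a).injective b

lemma mul_cop (a b : A) : B.mul a (B.cop a b) = a + b := by
  have h := B.lam_cop a b
  rw [lam] at h
  have h2 := congrArg (a + ·) h
  simpa [add_neg_cancel_left] using h2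

lemma key (a b c : A) : B.lam (a + b) (B.cop (B.cop a b) (B.cop a c)) = c := by
  rw [← B.mul_cop a b, B.lam_mul, B.lam_cop, B.lam_cop]

lemma cop_cycle (a b c : A) :
    B.cop (B.cop a b) (B.cop a c) = B.cop (B.cop b a) (B.cop b c) := by
  apply (B.lam_bijective (a + b)).injective
  rw [B.key a b c, add_comm, B.key b a c]

lemma inv_inv' (a : A) : B.inv (B.inv a) = a := by
  have h := B.mul_inv' (B.inv a)
  calc B.inv (B.inv a) = B.mul B.one (B.inv (B.inv a)) := (B.one_mul' _).symm
    _ = B.mul (B.mul a (B.inv a)) (B.inv (B.inv a)) := by rw [B.mul_inv']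
    _ = B.mul a (B.mul (B.inv a) (B.inv (B.inv a))) := B.mul_assoc' _ _ _
    _ = a := by rw [h, B.mul_one']

lemma cop_eq_lam_inv (a b : A) : B.cop a b = B.lam (B.inv a) b := by
  apply (B.lam_bijective a).injective
  rw [B.lam_cop, ← B.lam_mul, B.mul_inv', B.lam_one]

lemma cop_self (a : A) : B.cop a a = -(B.inv a) := by
  rw [B.cop_eq_lam_inv, lam, B.inv_mul', B.one_eq_zero, add_zero]

end LeftBrace

theorem stmt6 {A : Type*} [AddCommGroup A] [Finite A] (B : LeftBrace A) :
    (∀ a, Function.Bijective (B.cop a)) ∧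
    (∀ a b c, B.cop (B.cop a b) (B.cop a c) = B.cop (B.cop b a) (B.cop b c)) ∧
    Function.Bijective (fun a => B.cop a a) := by
  refine ⟨fun a => ?_, B.cop_cycle, ?_⟩
  · exact Function.bijective_iff_has_inverse.2
      ⟨B.lam a, B.lam_cop a, B.cop_lam a⟩
  · have h : (fun a => B.cop a a) = (fun x : A => -x) ∘ B.inv := by
      funext a; simp [B.cop_self]
    rw [h]
    exact neg_involutive.bijective.comp
      (Function.Involutive.bijective fun a => B.inv_inv' a)
end

section
/- Let X be a finite non-degenerate indecomposable cycle set whose cardinality is a prime number p. Then X is simple. -/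
universe u

theorem stmt13 {X : Type u} [Finite X] (op : X → X → X)
    (hbij : ∀ x, Function.Bijective (op x))
    (hlaw : ∀ x y z, op (op x y) (op x z) = op (op y x) (op y z))
    (hnd : Function.Bijective fun x => op x x)
    (p : ℕ) (hp : p.Prime) (hcard : Nat.card X = p)
    (hindec : ∀ x y : X,
      ∃ g ∈ Subgroup.closure {s : Equiv.Perm X | ∃ z, ∀ w, s w = op z w}, g x = y) :
    IsSimpleCycleSet op := by
  constructor
  · rw [hcard]; exact hp.one_lt
  intro Y opY hbijY hlawY f hsurj hhom hY
  haveI : Finite Y := Finite.of_surjective f hsurj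
  haveI : Nonempty X := by
    rcases Nat.card_pos_iff.mp (by rw [hcard]; exact hp.pos) with ⟨h1, _⟩
    exact h1
  -- every element of the closure preserves fibers
  have key : ∀ g ∈ Subgroup.closure {s : Equiv.Perm X | ∃ z, ∀ w, s w = op z w},
      ∀ a b : X, f a = f b ↔ f (g a) = f (g b) := by
    intro g hg
    induction hg using Subgroup.closure_induction with
    | mem s hs =>
      rcases hs with ⟨z, hz⟩
      intro a b
      simp only [hz, hhom]
      exact ⟨fun h => by rw [h], fun h => (hbijY (f z)).1 h⟩
    | one => intro a b; simp
    | mul g h _ _ hg hh =>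
      intro a b
      simpa only [Equiv.Perm.mul_apply] using (hh a b).trans (hg (h a) (h b))
    | inv g _ hg =>
      intro a b
      have := hg (g⁻¹ a) (g⁻¹ b)
      simp only [Equiv.Perm.coe_inv, Equiv.apply_symm_apply] at this
      exact this.symm
  -- fix a base point
  obtain ⟨x0⟩ := ‹Nonempty X›
  -- all fibers are equivalent to the fiber over f x0
  have fib : ∀ y : Y, Nonempty ({x // f x = f x0} ≃ {x // f x = y}) := by
    intro y
    obtain ⟨x, hx⟩ := hsurj y
    obtain ⟨g, hg, hgx⟩ := hindec x0 x
    refine ⟨⟨fun a => ⟨g a, ?_⟩, fun b => ⟨g⁻¹ b, ?_⟩, ?_, ?_⟩⟩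
    · rw [← hx, ← hgx, ← key g hg a x0]
      exact a.2
    · have := key g hg (g⁻¹ (b : X)) x0
      simp only [Equiv.Perm.coe_inv, Equiv.apply_symm_apply, hgx] at this ⊢
      rw [this, b.2, hx]
    · intro a; ext; simp
    · intro b; ext; simp
  -- X ≃ Y × fiber
  have hXequiv : Nonempty (X ≃ Y × {x // f x = f x0}) := by
    refine ⟨(Equiv.sigmaFiberEquiv f).symm.trans ?_⟩
    refine (Equiv.sigmaCongrRight fun y => (fib y).some.symm).trans ?_
    exact Equiv.sigmaEquivProd Y {x // f x = f x0}
  have hc : p = Nat.card Y * Nat.card {x // f x = f x0} := by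
    rw [← hcard, Nat.card_congr hXequiv.some, Nat.card_prod]
  have hdvd : Nat.card Y ∣ p := ⟨_, hc⟩
  have hYp : Nat.card Y = p := by
    rcases (Nat.Prime.eq_one_or_self_of_dvd hp _ hdvd) with h | h
    · omega
    · exact h
  have hk : Nat.card {x // f x = f x0} = 1 := by
    rw [hYp] at hc
    have := hp.pos
    nlinarith [hc]
  have hfib1 : ∀ y : Y, Nat.card {x // f x = y} = 1 := fun y => by
    rw [← Nat.card_congr (fib y).some, hk]
  refine ⟨fun a b hab => ?_, hsurj⟩
  have hsub : Subsingleton {x // f x = f a} :=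
    (Nat.card_eq_one_iff_unique.mp (hfib1 (f a))).1
  have : (⟨a, rfl⟩ : {x // f x = f a}) = ⟨b, hab.symm⟩ := Subsingleton.elim _ _
  exact congrArg Subtype.val this
end
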